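/- In the infinite-array two-group model, fix α, β ∈ (0,1) and a stage n, and suppose the log-likelihood ratio statistics Λ_n^j = log(f_{1n}(S_n^j)/f_{0n}(S_n^j)), j = 1, …, m, are (unconditionally) i.i.d. with a cdf H_n that is continuous and strictly increasing in a neighborhood of its quantile of order 1 − π_1, where π_1 = 1 − π_0. Let K_m = ∑_{j=1}^m θ_j, let Λ_n^{(1)} ≥ ⋯ ≥ Λ_n^{(m)} be the descending order statistics of (Λ_n^1, …, Λ_n^m), and define the Gap-rule stopping time T_g* = inf{n ∈ ℕ : Λ_n^{(K_m)} − Λ_n^{(K_m+1)} ≥ log(K_m(m−K_m)/min(α,β))}, with the defining inequality regarded as failing when K_m ∈ {0, m} and T_g* = ∞ if the inequality never holds. Then for every L ∈ ℕ, lim_{m→∞} P(T_g* ≤ L) = 0. -/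

import Mathlib

open MeasureTheory Filter

/-- Order statistics of a finite tuple: the `i`-th smallest value (0-indexed). -/
noncomputable def ordStat {m : ℕ} (t : Fin m → ℝ) : Fin m → ℝ :=
  t ∘ Tuple.sort t

/-- Cumulative average of the `q` smallest values, `(1/q) * ∑_{l=1}^q t^{(l)}`. -/
noncomputable def cumAvgLow {m : ℕ} (t : Fin m → ℝ) (q : ℕ) : ℝ :=
  (∑ i : Fin m, if (i : ℕ) < q then ordStat t i else 0) / q

/-- Cumulative average of `1 - (value)` over the `q` largest values,
`(1/q) * ∑_{l=1}^q (1 - t^{(m-l+1)})`. -/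
noncomputable def cumAvgHigh {m : ℕ} (t : Fin m → ℝ) (q : ℕ) : ℝ :=
  (∑ i : Fin m, if m - q ≤ (i : ℕ) then 1 - ordStat t i else 0) / q

/-- `r(t, α) = max {q ∈ {1,…,m} : (1/q) ∑_{l=1}^q t^{(l)} ≤ α}`, `0` if no such `q`. -/
noncomputable def rIdx {m : ℕ} (t : Fin m → ℝ) (α : ℝ) : ℕ :=
  sSup {q : ℕ | 1 ≤ q ∧ q ≤ m ∧ cumAvgLow t q ≤ α}

/-- `a(t, β) = max {q ∈ {1,…,m} : (1/q) ∑_{l=1}^q (1 - t^{(m-l+1)}) ≤ β}`, `0` if no such `q`. -/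
noncomputable def aIdx {m : ℕ} (t : Fin m → ℝ) (β : ℝ) : ℕ :=
  sSup {q : ℕ | 1 ≤ q ∧ q ≤ m ∧ cumAvgHigh t q ≤ β}

/-- Adaptive lower cutoff `t^l`: `t^{(r+1)}` if `r < m`, and `1` if `r = m`. -/
noncomputable def lowerCut {m : ℕ} (t : Fin m → ℝ) (α : ℝ) : ℝ :=
  if h : rIdx t α < m then ordStat t ⟨rIdx t α, h⟩ else 1

/-- Adaptive upper cutoff `t^u`: `t^{(m-a)}` if `a < m`, and `0` if `a = m`. -/
noncomputable def upperCut {m : ℕ} (t : Fin m → ℝ) (β : ℝ) : ℝ :=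
  if h : aIdx t β < m then ordStat t ⟨m - 1 - aIdx t β, by omega⟩ else 0

/-- The `k`-th order statistic with 1-based index `k` (junk value `1` out of range). -/
noncomputable def ordStatN {m : ℕ} (t : Fin m → ℝ) (k : ℕ) : ℝ :=
  if h : k - 1 < m then ordStat t ⟨k - 1, h⟩ else 1

/-- Empirical running-average functional `Q(u)` (equal to `0` below `t^{(1)}`,
using the convention `0/0 = 0`). -/
noncomputable def Qlow {m : ℕ} (t : Fin m → ℝ) (u : ℝ) : ℝ :=
  (∑ j : Fin m, if t j ≤ u then t j else 0) / (∑ j : Fin m, if t j ≤ u then (1:ℝ) else 0)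

/-- Empirical running-average functional `Q'(u)` (equal to `0` above `t^{(m)}`,
using the convention `0/0 = 0`). -/
noncomputable def Qhigh {m : ℕ} (t : Fin m → ℝ) (u : ℝ) : ℝ :=
  (∑ j : Fin m, if u ≤ t j then 1 - t j else 0) / (∑ j : Fin m, if u ≤ t j then (1:ℝ) else 0)

open ProbabilityTheory

/-- The Gap-rule condition at a given stage: for the vector `v` of log-likelihood ratios of
the `m` streams and `K` true alternatives, the gap between the `K`-th and `(K+1)`-th largest
values is at least `c`. It is regarded as failing when `K ∈ {0, m}`. -/
def gapCond {m : ℕ} (v : Fin m → ℝ) (K : ℕ) (c : ℝ) : Prop :=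
  ∃ (_h1 : 1 ≤ K) (_h2 : K + 1 ≤ m),
    c ≤ ordStat v ⟨m - K, by omega⟩ - ordStat v ⟨m - K - 1, by omega⟩

section GapAuxLemmas
open Topology

lemma count_gt_of_ordStat {m : ℕ} (v : Fin m → ℝ) (i : Fin m) {u : ℝ}
    (h : u < ordStat v i) :
    m - (i : ℕ) ≤ ∑ j : Fin m, if u < v j then 1 else 0 := by
  have hperm : (∑ j : Fin m, if u < v j then (1:ℕ) else 0)
      = ∑ j : Fin m, if u < ordStat v j then 1 else 0 :=
    (Equiv.sum_comp (Tuple.sort v) fun j => if u < v j then (1:ℕ) else 0).symm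
  rw [hperm]
  have hsub : Finset.Ici i ⊆ Finset.univ.filter (fun j => u < ordStat v j) := by
    intro j hj
    simp only [Finset.mem_Ici] at hj
    simp only [Finset.mem_filter, Finset.mem_univ, true_and]
    exact lt_of_lt_of_le h (Tuple.monotone_sort v hj)
  calc m - (i:ℕ) = (Finset.Ici i).card := (Fin.card_Ici i).symm
    _ ≤ (Finset.univ.filter (fun j => u < ordStat v j)).card := Finset.card_le_card hsub
    _ = ∑ j : Fin m, if u < ordStat v j then 1 else 0 := by
        simp [Finset.sum_boole]

lemma count_lt_of_ordStat {m : ℕ} (v : Fin m → ℝ) (i : Fin m) {u : ℝ}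
    (h : ordStat v i < u) :
    (i : ℕ) + 1 ≤ ∑ j : Fin m, if v j < u then 1 else 0 := by
  have hperm : (∑ j : Fin m, if v j < u then (1:ℕ) else 0)
      = ∑ j : Fin m, if ordStat v j < u then 1 else 0 :=
    (Equiv.sum_comp (Tuple.sort v) fun j => if v j < u then (1:ℕ) else 0).symm
  rw [hperm]
  have hsub : Finset.Iic i ⊆ Finset.univ.filter (fun j => ordStat v j < u) := by
    intro j hj
    simp only [Finset.mem_Iic] at hj
    simp only [Finset.mem_filter, Finset.mem_univ, true_and]
    exact lt_of_le_of_lt (Tuple.monotone_sort v hj) h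
  calc (i:ℕ) + 1 = (Finset.Iic i).card := (Fin.card_Iic i).symm
    _ ≤ (Finset.univ.filter (fun j => ordStat v j < u)).card := Finset.card_le_card hsub
    _ = ∑ j : Fin m, if ordStat v j < u then 1 else 0 := by
        simp [Finset.sum_boole]

lemma quantile_cutoffs {Ω : Type*} [MeasurableSpace Ω] {μ : Measure Ω} [IsProbabilityMeasure μ]
    {π0 : ℝ} (hπ0pos : 0 < π0) (hπ0lt : π0 < 1)
    (X : Ω → ℝ) (hX : Measurable X)
    (H : ℝ → ℝ) (hH : ∀ x, (μ {ω | X ω ≤ x}).toReal = H x)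
    (hreg : ∃ δ > (0:ℝ),
      ContinuousOn H (Set.Ioo (sInf {x : ℝ | π0 ≤ H x} - δ) (sInf {x : ℝ | π0 ≤ H x} + δ)) ∧
      StrictMonoOn H (Set.Ioo (sInf {x : ℝ | π0 ≤ H x} - δ) (sInf {x : ℝ | π0 ≤ H x} + δ))) :
    ∃ u l : ℝ, (μ {ω | u < X ω}).toReal < 1 - π0 ∧ (μ {ω | X ω < l}).toReal < π0 := by
  obtain ⟨δ, hδ, -, hsm⟩ := hreg
  set S : Set ℝ := {x | π0 ≤ H x} with hS
  have hmono : Monotone H := by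
    intro x y hxy
    rw [← hH, ← hH]
    exact ENNReal.toReal_mono (measure_ne_top μ _) (measure_mono fun ω h => le_trans h hxy)
  have hup : Tendsto (fun k : ℕ => μ {ω | X ω ≤ (k:ℝ)}) atTop
      (𝓝 (μ (⋃ k : ℕ, {ω | X ω ≤ (k:ℝ)}))) :=
    tendsto_measure_iUnion_atTop (fun a b hab ω h => le_trans h (show ((a:ℝ)) ≤ b by exact_mod_cast hab))
  have hUuniv : (⋃ k : ℕ, {ω | X ω ≤ (k:ℝ)}) = Set.univ := by
    ext ω
    simp only [Set.mem_iUnion, Set.mem_setOf_eq, Set.mem_univ, iff_true]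
    exact exists_nat_ge (X ω)
  rw [hUuniv, measure_univ] at hup
  have hupR : Tendsto (fun k : ℕ => H (k:ℝ)) atTop (𝓝 1) := by
    have := (ENNReal.tendsto_toReal ENNReal.one_ne_top).comp hup
    simpa [Function.comp_def, hH] using this
  have hSne : S.Nonempty := by
    obtain ⟨k, hk⟩ := (hupR.eventually_const_le hπ0lt).exists
    exact ⟨(k:ℝ), hk⟩
  have hdn : Tendsto (fun k : ℕ => μ {ω | X ω ≤ -(k:ℝ)}) atTop
      (𝓝 (μ (⋂ k : ℕ, {ω | X ω ≤ -(k:ℝ)}))) :=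
    tendsto_measure_iInter_atTop (fun k => (hX measurableSet_Iic).nullMeasurableSet)
      (fun a b hab ω h => le_trans h (neg_le_neg (show ((a:ℝ)) ≤ b by exact_mod_cast hab))) ⟨0, measure_ne_top μ _⟩
  have hIempty : (⋂ k : ℕ, {ω | X ω ≤ -(k:ℝ)}) = ∅ := by
    ext ω
    simp only [Set.mem_iInter, Set.mem_setOf_eq, Set.mem_empty_iff_false, iff_false, not_forall]
    obtain ⟨k, hk⟩ := exists_nat_gt (-X ω)
    exact ⟨k, by push_neg; linarith⟩
  rw [hIempty, measure_empty] at hdn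
  have hdnR : Tendsto (fun k : ℕ => H (-(k:ℝ))) atTop (𝓝 0) := by
    have := (ENNReal.tendsto_toReal ENNReal.zero_ne_top).comp hdn
    simpa [Function.comp_def, hH] using this
  obtain ⟨k0, hk0⟩ := (hdnR.eventually_lt_const hπ0pos).exists
  have hbdd : BddBelow S := by
    refine ⟨-(k0:ℝ), fun x hx => ?_⟩
    by_contra hc
    push_neg at hc
    exact absurd (le_trans hx (hmono hc.le)) (not_le.2 hk0)
  set q := sInf S with hqdef
  have hπq : π0 ≤ H q := by
    have hseq : Tendsto (fun k : ℕ => μ {ω | X ω ≤ q + 1/((k:ℝ)+1)}) atTop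
        (𝓝 (μ (⋂ k : ℕ, {ω | X ω ≤ q + 1/((k:ℝ)+1)}))) := by
      refine tendsto_measure_iInter_atTop (fun k => (hX measurableSet_Iic).nullMeasurableSet)
        (fun a b hab ω h => ?_) ⟨0, measure_ne_top μ _⟩
      simp only [Set.mem_setOf_eq] at h ⊢
      refine le_trans h ?_
      have : 1/((b:ℝ)+1) ≤ 1/((a:ℝ)+1) := by
        apply one_div_le_one_div_of_le (by positivity)
        have : (a:ℝ) ≤ b := by exact_mod_cast hab
        linarith
      linarith
    have hIeq : (⋂ k : ℕ, {ω | X ω ≤ q + 1/((k:ℝ)+1)}) = {ω | X ω ≤ q} := by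
      ext ω
      simp only [Set.mem_iInter, Set.mem_setOf_eq]
      constructor
      · intro h
        refine le_of_forall_pos_le_add fun ε hε => ?_
        obtain ⟨k, hk⟩ := exists_nat_one_div_lt hε
        exact le_trans (h k) (by linarith)
      · intro h k
        have : (0:ℝ) < 1/((k:ℝ)+1) := by positivity
        linarith
    rw [hIeq] at hseq
    have hseqR : Tendsto (fun k : ℕ => H (q + 1/((k:ℝ)+1))) atTop (𝓝 (H q)) := by
      have := (ENNReal.tendsto_toReal (measure_ne_top μ _)).comp hseq
      simpa [Function.comp_def, hH] using this
    refine ge_of_tendsto' hseqR fun k => ?_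
    have hk : q < q + 1/((k:ℝ)+1) := lt_add_of_pos_right _ (by positivity)
    obtain ⟨s, hsS, hs⟩ := (csInf_lt_iff hbdd hSne).1 hk
    exact le_trans hsS (hmono hs.le)
  refine ⟨q + δ/2, q - δ/2, ?_, ?_⟩
  · have hlt : H q < H (q + δ/2) :=
      hsm ⟨by linarith, by linarith⟩ ⟨by linarith, by linarith⟩ (by linarith)
    have hcompl : {ω | q + δ/2 < X ω} = {ω | X ω ≤ q + δ/2}ᶜ := by
      ext ω; simp [not_le]
    rw [hcompl, prob_compl_eq_one_sub (show MeasurableSet {ω | X ω ≤ q + δ/2} from hX measurableSet_Iic),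
        ENNReal.toReal_sub_of_le prob_le_one ENNReal.one_ne_top, ENNReal.toReal_one, hH]
    linarith
  · have hl : H (q - δ/2) < π0 := by
      by_contra hc
      push_neg at hc
      have : q ≤ q - δ/2 := csInf_le hbdd hc
      linarith
    have hle : (μ {ω | X ω < q - δ/2}).toReal ≤ H (q - δ/2) := by
      rw [← hH]
      exact ENNReal.toReal_mono (measure_ne_top μ _)
        (measure_mono fun ω h => le_of_lt (show X ω < q - δ/2 from h))
    linarith

lemma slln_aux {Ω : Type*} [MeasurableSpace Ω] {μ : Measure Ω} [IsProbabilityMeasure μ]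
    (θ : ℕ → Ω → ℕ) (Λ : ℕ → ℕ → Ω → ℝ)
    (hθmeas : ∀ j, Measurable (θ j)) (hΛmeas : ∀ n j, Measurable (Λ n j))
    (hindep : iIndepFun
      (fun j ω => (θ j ω, fun n => Λ n j ω)) μ)
    (hident : ∀ j, IdentDistrib (fun ω => (θ j ω, fun n => Λ n j ω))
      (fun ω => (θ 0 ω, fun n => Λ n 0 ω)) μ μ)
    (g : ℕ × (ℕ → ℝ) → ℝ) (hg : Measurable g)
    (hbd : ∀ ω, ‖g (θ 0 ω, fun n => Λ n 0 ω)‖ ≤ 1)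
    (c : ℝ) (hc : (∫ ω, g (θ 0 ω, fun n => Λ n 0 ω) ∂μ) = c) :
    ∀ᵐ ω ∂μ, Tendsto (fun m : ℕ => (∑ j ∈ Finset.range m, g (θ j ω, fun n => Λ n j ω)) / m)
      atTop (𝓝 c) := by
  subst hc
  have hpairmeas : ∀ j, Measurable (fun ω => ((θ j ω, fun n => Λ n j ω) : ℕ × (ℕ → ℝ))) :=
    fun j => (hθmeas j).prodMk (measurable_pi_lambda _ fun n => hΛmeas n j)
  have hint : Integrable (fun ω => g (θ 0 ω, fun n => Λ n 0 ω)) μ :=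
    (integrable_const (1:ℝ)).mono' ((hg.comp (hpairmeas 0)).aestronglyMeasurable)
      (Filter.Eventually.of_forall hbd)
  exact strong_law_ae_real (fun j ω => g (θ j ω, fun n => Λ n j ω)) hint
    (fun i j hij => (hindep.indepFun hij).comp hg hg)
    (fun j => (hident j).comp hg)


end GapAuxLemmas

open Topology

/-- **Lemma 4.** The stopping time of the asymptotically optimal Gap rule diverges weakly as
the number of hypotheses `m → ∞`: for every `L`, `P(T_g* ≤ L) → 0`. -/
theorem stmt_15 {Ω : Type*} [MeasurableSpace Ω] {μ : Measure Ω} [IsProbabilityMeasure μ]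
    (π0 : ℝ) (hπ0 : π0 ∈ Set.Ioo (0:ℝ) 1)
    (α β : ℝ) (hα : α ∈ Set.Ioo (0:ℝ) 1) (hβ : β ∈ Set.Ioo (0:ℝ) 1)
    -- true states and log-likelihood ratio statistics, i.i.d. across streams j
    (θ : ℕ → Ω → ℕ) (Λ : ℕ → ℕ → Ω → ℝ)
    (hθmeas : ∀ j, Measurable (θ j)) (hΛmeas : ∀ n j, Measurable (Λ n j))
    (hθ01 : ∀ j ω, θ j ω = 0 ∨ θ j ω = 1)
    (hindep : iIndepFun
      (fun j ω => (θ j ω, fun n => Λ n j ω)) μ)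
    (hident : ∀ j, IdentDistrib (fun ω => (θ j ω, fun n => Λ n j ω))
      (fun ω => (θ 0 ω, fun n => Λ n 0 ω)) μ μ)
    (hbern : μ {ω | θ 0 ω = 1} = ENNReal.ofReal (1 - π0))
    -- the common cdf H_n of the log-likelihood ratios at stage n
    (H : ℕ → ℝ → ℝ) (hH : ∀ n x, (μ {ω | Λ n 0 ω ≤ x}).toReal = H n x)
    -- H_n is continuous and strictly increasing near its quantile of order 1 − π1 = π0
    (hreg : ∀ n, ∃ δ > (0:ℝ),
      ContinuousOn (H n) (Set.Ioo (sInf {x : ℝ | π0 ≤ H n x} - δ)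
          (sInf {x : ℝ | π0 ≤ H n x} + δ)) ∧
      StrictMonoOn (H n) (Set.Ioo (sInf {x : ℝ | π0 ≤ H n x} - δ)
          (sInf {x : ℝ | π0 ≤ H n x} + δ))) :
    ∀ L : ℕ, Tendsto (fun m =>
      μ {ω | ∃ n ≤ L, gapCond (fun j : Fin m => Λ n (j : ℕ) ω) (∑ j : Fin m, θ (j : ℕ) ω)
          (Real.log (((∑ j : Fin m, θ (j : ℕ) ω : ℕ) : ℝ)
            * ((m : ℝ) - ((∑ j : Fin m, θ (j : ℕ) ω : ℕ) : ℝ)) / min α β))})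
      atTop (nhds 0) := by
  obtain ⟨hπ0pos, hπ0lt⟩ := hπ0
  intro L
  classical
  have key : ∀ n : ℕ, ∃ u l : ℝ,
      (μ {ω | u < Λ n 0 ω}).toReal < 1 - π0 ∧ (μ {ω | Λ n 0 ω < l}).toReal < π0 :=
    fun n => quantile_cutoffs hπ0pos hπ0lt (Λ n 0) (hΛmeas n 0) (H n) (hH n) (hreg n)
  choose up lo hupP hloP using key
  -- strong laws
  have hY : ∀ᵐ ω ∂μ, Tendsto (fun m : ℕ => (∑ j ∈ Finset.range m, (θ j ω : ℝ)) / m)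
      atTop (𝓝 (1 - π0)) := by
    refine slln_aux θ Λ hθmeas hΛmeas hindep hident (fun p => (p.1 : ℝ))
      (Measurable.of_discrete.comp measurable_fst)
      (fun ω => by rcases hθ01 0 ω with h | h <;> simp [h]) (1 - π0) ?_
    show (∫ ω, ((θ 0 ω : ℕ) : ℝ) ∂μ) = 1 - π0
    have h1 : (fun ω => ((θ 0 ω : ℕ) : ℝ)) = Set.indicator {ω | θ 0 ω = 1} 1 := by
      funext ω
      rcases hθ01 0 ω with h | h <;>
        simp [Set.indicator_apply, Set.mem_setOf_eq, h]
    rw [h1, integral_indicator_one (show MeasurableSet {ω | θ 0 ω = 1} from (hθmeas 0) (measurableSet_singleton 1)), measureReal_def, hbern,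
      ENNReal.toReal_ofReal (by linarith)]
  have hX : ∀ᵐ ω ∂μ, ∀ n : ℕ, Tendsto
      (fun m : ℕ => (∑ j ∈ Finset.range m, if up n < Λ n j ω then (1:ℝ) else 0) / m)
      atTop (𝓝 ((μ {ω | up n < Λ n 0 ω}).toReal)) := by
    rw [ae_all_iff]
    intro n
    refine slln_aux θ Λ hθmeas hΛmeas hindep hident
      (fun p => if up n < p.2 n then (1:ℝ) else 0)
      (Measurable.ite (measurableSet_lt measurable_const
        (show Measurable fun p : ℕ × (ℕ → ℝ) => p.2 n from
          (measurable_pi_apply n).comp measurable_snd)) measurable_const measurable_const)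
      (fun ω => by by_cases h : up n < Λ n 0 ω <;> simp [h]) _ ?_
    show (∫ ω, (if up n < Λ n 0 ω then (1:ℝ) else 0) ∂μ) = (μ {ω | up n < Λ n 0 ω}).toReal
    have h1 : (fun ω => if up n < Λ n 0 ω then (1:ℝ) else 0)
        = Set.indicator {ω | up n < Λ n 0 ω} 1 := by
      funext ω
      by_cases h : up n < Λ n 0 ω <;> simp [Set.indicator_apply, Set.mem_setOf_eq, h]
    rw [h1]
    exact integral_indicator_one (measurableSet_lt measurable_const (hΛmeas n 0))
  have hZ : ∀ᵐ ω ∂μ, ∀ n : ℕ, Tendsto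
      (fun m : ℕ => (∑ j ∈ Finset.range m, if Λ n j ω < lo n then (1:ℝ) else 0) / m)
      atTop (𝓝 ((μ {ω | Λ n 0 ω < lo n}).toReal)) := by
    rw [ae_all_iff]
    intro n
    refine slln_aux θ Λ hθmeas hΛmeas hindep hident
      (fun p => if p.2 n < lo n then (1:ℝ) else 0)
      (Measurable.ite (measurableSet_lt
        (show Measurable fun p : ℕ × (ℕ → ℝ) => p.2 n from
          (measurable_pi_apply n).comp measurable_snd) measurable_const)
        measurable_const measurable_const)
      (fun ω => by by_cases h : Λ n 0 ω < lo n <;> simp [h]) _ ?_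
    show (∫ ω, (if Λ n 0 ω < lo n then (1:ℝ) else 0) ∂μ) = (μ {ω | Λ n 0 ω < lo n}).toReal
    have h1 : (fun ω => if Λ n 0 ω < lo n then (1:ℝ) else 0)
        = Set.indicator {ω | Λ n 0 ω < lo n} 1 := by
      funext ω
      by_cases h : Λ n 0 ω < lo n <;> simp [Set.indicator_apply, Set.mem_setOf_eq, h]
    rw [h1]
    exact integral_indicator_one (measurableSet_lt (hΛmeas n 0) measurable_const)
  -- deterministic threshold bound
  have hαβpos : 0 < min α β := lt_min hα.1 hβ.1
  have hαβle : min α β ≤ 1 := le_trans (min_le_left _ _) hα.2.le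
  have hlog : ∀ᶠ m : ℕ in atTop, ∀ n ∈ Finset.range (L+1),
      up n - lo n < Real.log ((m:ℝ) - 1) := by
    rw [eventually_all_finset]
    intro n _
    have h1 : Tendsto (fun m : ℕ => Real.log ((m:ℝ) - 1)) atTop atTop := by
      apply Real.tendsto_log_atTop.comp
      have h2 := tendsto_atTop_add_const_right atTop (-1 : ℝ) tendsto_natCast_atTop_atTop
      exact h2.congr fun m => (sub_eq_add_neg _ _).symm
    exact h1.eventually_gt_atTop _
  -- the dominating measurable sets
  set D : ℕ → Set Ω := fun m => {ω | ∃ n ∈ Finset.range (L+1),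
      (∑ j : Fin m, θ (j:ℕ) ω) ≤ (∑ j : Fin m, if up n < Λ n (j:ℕ) ω then 1 else 0) ∨
      m ≤ (∑ j : Fin m, if Λ n (j:ℕ) ω < lo n then 1 else 0) + ∑ j : Fin m, θ (j:ℕ) ω}
    with hD
  have hDmeas : ∀ m, MeasurableSet (D m) := by
    intro m
    have hrepr : D m = ⋃ n ∈ Finset.range (L+1),
        ({ω | (∑ j : Fin m, θ (j:ℕ) ω) ≤ (∑ j : Fin m, if up n < Λ n (j:ℕ) ω then 1 else 0)} ∪
         {ω | m ≤ (∑ j : Fin m, if Λ n (j:ℕ) ω < lo n then 1 else 0) + ∑ j : Fin m, θ (j:ℕ) ω}) := by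
      simp only [hD]
      ext ω
      simp only [Set.mem_setOf_eq, Set.mem_iUnion, Set.mem_union]
      constructor
      · rintro ⟨n, hn, h⟩; exact ⟨n, hn, h⟩
      · rintro ⟨n, hn, h⟩; exact ⟨n, hn, h⟩
    rw [hrepr]
    refine Set.Finite.measurableSet_biUnion (Finset.range (L+1)).finite_toSet fun n _ => ?_
    have hsum1 : Measurable fun ω => (∑ j : Fin m, θ (j:ℕ) ω : ℕ) :=
      Finset.measurable_sum _ fun j _ => hθmeas (j:ℕ)
    have hsum2 : Measurable fun ω => (∑ j : Fin m, if up n < Λ n (j:ℕ) ω then 1 else 0 : ℕ) :=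
      Finset.measurable_sum _ fun j _ => Measurable.ite
        (measurableSet_lt measurable_const (hΛmeas n (j:ℕ))) measurable_const measurable_const
    have hsum3 : Measurable fun ω => (∑ j : Fin m, if Λ n (j:ℕ) ω < lo n then 1 else 0 : ℕ) :=
      Finset.measurable_sum _ fun j _ => Measurable.ite
        (measurableSet_lt (hΛmeas n (j:ℕ)) measurable_const) measurable_const measurable_const
    exact (measurableSet_le hsum1 hsum2).union (measurableSet_le measurable_const (hsum3.add hsum1))
  -- containment
  have hsub : ∀ᶠ m : ℕ in atTop,
      {ω | ∃ n ≤ L, gapCond (fun j : Fin m => Λ n (j : ℕ) ω) (∑ j : Fin m, θ (j : ℕ) ω)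
          (Real.log (((∑ j : Fin m, θ (j : ℕ) ω : ℕ) : ℝ)
            * ((m : ℝ) - ((∑ j : Fin m, θ (j : ℕ) ω : ℕ) : ℝ)) / min α β))} ⊆ D m := by
    filter_upwards [hlog] with m hm ω hω
    obtain ⟨n, hnL, h1, h2, hgap⟩ := hω
    have hnmem : n ∈ Finset.range (L+1) := Finset.mem_range.2 (by omega)
    have hm2 : 2 ≤ m := by omega
    have hK1 : (1:ℝ) ≤ ((∑ j : Fin m, θ (j:ℕ) ω : ℕ):ℝ) := by exact_mod_cast h1
    have hKm : ((∑ j : Fin m, θ (j:ℕ) ω : ℕ):ℝ) + 1 ≤ (m:ℝ) := by exact_mod_cast h2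
    have hpos : (0:ℝ) < (m:ℝ) - 1 := by
      have : (2:ℝ) ≤ (m:ℝ) := by exact_mod_cast hm2
      linarith
    have hstep1 : (m:ℝ) - 1 ≤ ((∑ j : Fin m, θ (j:ℕ) ω : ℕ):ℝ)
        * ((m:ℝ) - ((∑ j : Fin m, θ (j:ℕ) ω : ℕ):ℝ)) := by nlinarith
    have hstep2 : ((∑ j : Fin m, θ (j:ℕ) ω : ℕ):ℝ) * ((m:ℝ) - ((∑ j : Fin m, θ (j:ℕ) ω : ℕ):ℝ))
        ≤ ((∑ j : Fin m, θ (j:ℕ) ω : ℕ):ℝ) * ((m:ℝ) - ((∑ j : Fin m, θ (j:ℕ) ω : ℕ):ℝ)) / min α β := by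
      rw [le_div_iff₀ hαβpos]
      nlinarith
    have hclog : up n - lo n < Real.log (((∑ j : Fin m, θ (j:ℕ) ω : ℕ):ℝ)
        * ((m:ℝ) - ((∑ j : Fin m, θ (j:ℕ) ω : ℕ):ℝ)) / min α β) :=
      lt_of_lt_of_le (hm n hnmem) (Real.log_le_log hpos (le_trans hstep1 hstep2))
    have hgap2 : up n - lo n <
        ordStat (fun j : Fin m => Λ n (j:ℕ) ω) ⟨m - (∑ j : Fin m, θ (j:ℕ) ω), by omega⟩
        - ordStat (fun j : Fin m => Λ n (j:ℕ) ω) ⟨m - (∑ j : Fin m, θ (j:ℕ) ω) - 1, by omega⟩ :=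
      lt_of_lt_of_le hclog hgap
    simp only [hD, Set.mem_setOf_eq]
    refine ⟨n, hnmem, ?_⟩
    rcases lt_or_ge (up n)
        (ordStat (fun j : Fin m => Λ n (j:ℕ) ω) ⟨m - (∑ j : Fin m, θ (j:ℕ) ω), by omega⟩)
      with hA | hA
    · left
      have hcnt : m - (m - (∑ j : Fin m, θ (j:ℕ) ω))
          ≤ ∑ j : Fin m, if up n < Λ n (j:ℕ) ω then 1 else 0 :=
        count_gt_of_ordStat (fun j : Fin m => Λ n (j:ℕ) ω)
          ⟨m - (∑ j : Fin m, θ (j:ℕ) ω), by omega⟩ hA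
      omega
    · right
      have hB : ordStat (fun j : Fin m => Λ n (j:ℕ) ω)
          ⟨m - (∑ j : Fin m, θ (j:ℕ) ω) - 1, by omega⟩ < lo n := by linarith
      have hcnt : (m - (∑ j : Fin m, θ (j:ℕ) ω) - 1) + 1
          ≤ ∑ j : Fin m, if Λ n (j:ℕ) ω < lo n then 1 else 0 :=
        count_lt_of_ordStat (fun j : Fin m => Λ n (j:ℕ) ω)
          ⟨m - (∑ j : Fin m, θ (j:ℕ) ω) - 1, by omega⟩ hB
      omega
  -- a.e. eventually not in D
  have hae : ∀ᵐ ω ∂μ, ∀ᶠ m : ℕ in atTop, ω ∉ D m := by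
    filter_upwards [hX, hZ, hY] with ω hXω hZω hYω
    have hper : ∀ n ∈ Finset.range (L+1), ∀ᶠ m : ℕ in atTop,
        ¬((∑ j : Fin m, θ (j:ℕ) ω) ≤ (∑ j : Fin m, if up n < Λ n (j:ℕ) ω then 1 else 0) ∨
          m ≤ (∑ j : Fin m, if Λ n (j:ℕ) ω < lo n then 1 else 0) + ∑ j : Fin m, θ (j:ℕ) ω) := by
      intro n _
      have e1 : ∀ᶠ m : ℕ in atTop,
          (∑ j ∈ Finset.range m, if up n < Λ n j ω then (1:ℝ) else 0) / m
            < (∑ j ∈ Finset.range m, (θ j ω : ℝ)) / m :=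
        (hXω n).eventually_lt hYω (hupP n)
      have e2 : ∀ᶠ m : ℕ in atTop,
          ((∑ j ∈ Finset.range m, if Λ n j ω < lo n then (1:ℝ) else 0) / m
            + (∑ j ∈ Finset.range m, (θ j ω : ℝ)) / m) < 1 :=
        ((hZω n).add hYω).eventually_lt
          (tendsto_const_nhds : Tendsto (fun _ : ℕ => (1:ℝ)) atTop (𝓝 1))
          (by linarith [hloP n])
      filter_upwards [e1, e2, eventually_ge_atTop 1] with m hm1 hm2 hm3
      have hmpos : (0:ℝ) < m := by exact_mod_cast hm3
      have hcX : ((∑ j : Fin m, if up n < Λ n (j:ℕ) ω then 1 else 0 : ℕ) : ℝ)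
          = ∑ j ∈ Finset.range m, if up n < Λ n j ω then (1:ℝ) else 0 := by
        push_cast
        exact Fin.sum_univ_eq_sum_range (fun j => if up n < Λ n j ω then (1:ℝ) else 0) m
      have hcZ : ((∑ j : Fin m, if Λ n (j:ℕ) ω < lo n then 1 else 0 : ℕ) : ℝ)
          = ∑ j ∈ Finset.range m, if Λ n j ω < lo n then (1:ℝ) else 0 := by
        push_cast
        exact Fin.sum_univ_eq_sum_range (fun j => if Λ n j ω < lo n then (1:ℝ) else 0) m
      have hcK : ((∑ j : Fin m, θ (j:ℕ) ω : ℕ) : ℝ) = ∑ j ∈ Finset.range m, (θ j ω : ℝ) := by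
        push_cast
        exact Fin.sum_univ_eq_sum_range (fun j => (θ j ω : ℝ)) m
      rintro (h | h)
      · have hlt : (∑ j ∈ Finset.range m, if up n < Λ n j ω then (1:ℝ) else 0)
            < (∑ j ∈ Finset.range m, (θ j ω : ℝ)) := by
          have h' := mul_lt_mul_of_pos_right hm1 hmpos
          rwa [div_mul_cancel₀ _ (ne_of_gt hmpos), div_mul_cancel₀ _ (ne_of_gt hmpos)] at h'
        have hle : ((∑ j : Fin m, θ (j:ℕ) ω : ℕ):ℝ)
            ≤ ((∑ j : Fin m, if up n < Λ n (j:ℕ) ω then 1 else 0 : ℕ):ℝ) := by exact_mod_cast h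
        rw [hcX, hcK] at hle
        linarith
      · have hlt2 : (∑ j ∈ Finset.range m, if Λ n j ω < lo n then (1:ℝ) else 0)
            + (∑ j ∈ Finset.range m, (θ j ω : ℝ)) < m := by
          rw [← add_div] at hm2
          exact (div_lt_one hmpos).1 hm2
        have hle : (m:ℝ) ≤ ((∑ j : Fin m, if Λ n (j:ℕ) ω < lo n then 1 else 0 : ℕ):ℝ)
            + ((∑ j : Fin m, θ (j:ℕ) ω : ℕ):ℝ) := by exact_mod_cast h
        rw [hcZ, hcK] at hle
        linarith
    have hcomb := (eventually_all_finset (Finset.range (L+1))).2 hper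
    filter_upwards [hcomb] with m hm
    simp only [hD, Set.mem_setOf_eq]
    rintro ⟨n, hn, hP⟩
    exact hm n hn hP
  -- measure of D tends to zero
  have hDtend : Tendsto (fun m => μ (D m)) atTop (𝓝 0) := by
    have h0 : Tendsto (fun m => ∫⁻ ω, (D m).indicator (fun _ => (1:ENNReal)) ω ∂μ) atTop
        (𝓝 (∫⁻ _x : Ω, (0:ENNReal) ∂μ)) := by
      refine tendsto_lintegral_of_dominated_convergence (fun _ => (1:ENNReal))
        (fun m => measurable_const.indicator (hDmeas m)) ?_ ?_ ?_
      · exact fun m => Filter.Eventually.of_forall fun ω => by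
          by_cases h : ω ∈ D m <;> simp [Set.indicator_apply, h]
      · simp
      · filter_upwards [hae] with ω hω
        refine Tendsto.congr' ?_ tendsto_const_nhds
        exact hω.mono fun m hm => (Set.indicator_of_notMem hm _).symm
    simp only [lintegral_zero] at h0
    refine h0.congr fun m => ?_
    exact lintegral_indicator_one (hDmeas m)
  refine tendsto_of_tendsto_of_tendsto_of_le_of_le' tendsto_const_nhds hDtend
    (Filter.Eventually.of_forall fun m => zero_le) ?_
  filter_upwards [hsub] with m hm
  exact measure_mono hm
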